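/- arXiv:1108.5119 — 2 statements merged into one kernel-verified Lean document; each statement's English description precedes it below -/
import Mathlib

section
/- Kernel estimate for separated cubes: Let K : ℝ^d × ℝ^d → ℝ satisfy |K(x,y) − K(x,y')| ≤ C·ψ(|y−y'|/|x−y|)/|x−y|^d whenever |x−y| > 2|y−y'| (with |·| the ℓ^∞ norm and ψ increasing). Let I and J be cubes with ℓ(I) ≤ ℓ(J) and dist(I,J) ≥ ℓ(I), let h_I be supported on I with ∫h_I = 0 and ‖h_I‖_1 ≤ |I|^{1/2}, and let h_J be supported on J with ‖h_J‖_1 ≤ |J|^{1/2}. If moreover dist(I,J) > 2·ℓ(I), then |∬ h_J(x)K(x,y)h_I(y) dy dx| ≤ C·dist(I,J)^{-d}·ψ(ℓ(I)/dist(I,J))·|I|^{1/2}·|J|^{1/2}. -/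
open MeasureTheory

/-- Kernel estimate for separated cubes.  Here `Fin d → ℝ` carries the sup (`ℓ^∞`) metric,
`I` and `J` are axis-parallel cubes of side lengths `rI ≤ rJ`, `D = dist(I,J)`, and
`hI'`, `hJ'` play the roles of the Haar-type functions `h_I`, `h_J`. -/
theorem stmt16 (d : ℕ) (hd : 1 ≤ d) (C : ℝ) (hC : 0 ≤ C)
    (ψ : ℝ → ℝ) (hψmono : MonotoneOn ψ (Set.Icc 0 1))
    (hψ0 : ∀ t ∈ Set.Icc (0:ℝ) 1, 0 ≤ ψ t)
    (K : (Fin d → ℝ) → (Fin d → ℝ) → ℝ)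
    (hK : ∀ x y y' : Fin d → ℝ, dist x y > 2 * dist y y' →
      |K x y - K x y'| ≤ C * ψ (dist y y' / dist x y) / dist x y ^ d)
    (cI cJ : Fin d → ℝ) (rI rJ : ℝ) (hrI : 0 < rI) (hrIJ : rI ≤ rJ)
    (I J : Set (Fin d → ℝ))
    (hI : I = {x | ∀ i, x i ∈ Set.Ico (cI i) (cI i + rI)})
    (hJ : J = {x | ∀ i, x i ∈ Set.Ico (cJ i) (cJ i + rJ)})
    (D : ℝ) (hD : D = sInf (Set.image2 dist I J))
    (hD1 : rI ≤ D) (hD2 : 2 * rI < D)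
    (hI' hJ' : (Fin d → ℝ) → ℝ)
    (hI'int : Integrable hI') (hJ'int : Integrable hJ')
    (hI'supp : ∀ x ∉ I, hI' x = 0) (hJ'supp : ∀ x ∉ J, hJ' x = 0)
    (hI'cancel : ∫ x, hI' x = 0)
    (hI'L1 : ∫ x, |hI' x| ≤ Real.sqrt (rI ^ d))
    (hJ'L1 : ∫ x, |hJ' x| ≤ Real.sqrt (rJ ^ d)) :
    |∫ x, ∫ y, hJ' x * K x y * hI' y| ≤
      C / D ^ d * ψ (rI / D) * (Real.sqrt (rI ^ d) * Real.sqrt (rJ ^ d)) := by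

  have hDpos : 0 < D := lt_of_lt_of_le hrI hD1
  have hDdpos : 0 < D ^ d := pow_pos hDpos d
  have hmem : rI / D ∈ Set.Icc (0:ℝ) 1 :=
    ⟨div_nonneg hrI.le hDpos.le, div_le_one_of_le₀ hD1 hDpos.le⟩
  have hψnn : 0 ≤ ψ (rI / D) := hψ0 _ hmem
  set M : ℝ := C / D ^ d * ψ (rI / D) with hM
  have hMnn : 0 ≤ M := mul_nonneg (div_nonneg hC hDdpos.le) hψnn
  have hdistIJ : ∀ x ∈ J, ∀ y ∈ I, D ≤ dist x y := by
    intro x hx y hy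
    rw [hD, dist_comm]
    refine csInf_le ⟨0, ?_⟩ (Set.mem_image2_of_mem hy hx)
    rintro z ⟨a, ha, b, hb, rfl⟩
    exact dist_nonneg
  have hdistI : ∀ y ∈ I, dist y cI ≤ rI := by
    intro y hy
    rw [hI] at hy
    rw [dist_pi_le_iff hrI.le]
    intro i
    have h := hy i
    rw [Real.dist_eq, abs_le]
    constructor <;> [linarith [h.1]; linarith [h.2]]
  have hKbound : ∀ x ∈ J, ∀ y ∈ I, |K x y - K x cI| ≤ M := by
    intro x hx y hy
    have h1 : dist y cI ≤ rI := hdistI y hy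
    have h2 : D ≤ dist x y := hdistIJ x hx y hy
    have hdxy : 0 < dist x y := lt_of_lt_of_le hDpos h2
    have h3 : dist x y > 2 * dist y cI := by
      have : (2:ℝ) * dist y cI ≤ 2 * rI := by linarith
      linarith
    refine (hK x y cI h3).trans ?_
    have hratio : dist y cI / dist x y ≤ rI / D :=
      div_le_div₀ hrI.le h1 hDpos h2
    have hmem2 : dist y cI / dist x y ∈ Set.Icc (0:ℝ) 1 :=
      ⟨div_nonneg dist_nonneg hdxy.le, hratio.trans hmem.2⟩
    have hψle : ψ (dist y cI / dist x y) ≤ ψ (rI / D) := hψmono hmem2 hmem hratio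
    have hnum : C * ψ (dist y cI / dist x y) ≤ C * ψ (rI / D) :=
      mul_le_mul_of_nonneg_left hψle hC
    have hden : D ^ d ≤ dist x y ^ d := pow_le_pow_left₀ hDpos.le h2 d
    calc C * ψ (dist y cI / dist x y) / dist x y ^ d
        ≤ C * ψ (rI / D) / D ^ d :=
          div_le_div₀ (mul_nonneg hC hψnn) hnum hDdpos hden
      _ = M := by rw [hM]; ring
  have hinner : ∀ x ∈ J, |∫ y, K x y * hI' y| ≤ M * Real.sqrt (rI ^ d) := by
    intro x hx
    by_cases hint : Integrable (fun y => K x y * hI' y)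
    · have hsub : ∫ y, (K x y - K x cI) * hI' y = ∫ y, K x y * hI' y := by
        have heq : (fun y => (K x y - K x cI) * hI' y)
            = fun y => K x y * hI' y - K x cI * hI' y := by
          ext y; ring
        rw [heq, integral_sub hint (hI'int.const_mul (K x cI)), integral_const_mul,
          hI'cancel, mul_zero, sub_zero]
      rw [← hsub, ← Real.norm_eq_abs]
      have hbd : ∀ y, ‖(K x y - K x cI) * hI' y‖ ≤ M * |hI' y| := by
        intro y
        by_cases hy : y ∈ I
        · rw [Real.norm_eq_abs, abs_mul]
          exact mul_le_mul_of_nonneg_right (hKbound x hx y hy) (abs_nonneg _)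
        · simp [hI'supp y hy, hMnn]
      calc ‖∫ y, (K x y - K x cI) * hI' y‖ ≤ ∫ y, M * |hI' y| :=
            norm_integral_le_of_norm_le ((hI'int.abs).const_mul M)
              (Filter.Eventually.of_forall hbd)
        _ = M * ∫ y, |hI' y| := integral_const_mul _ _
        _ ≤ M * Real.sqrt (rI ^ d) := mul_le_mul_of_nonneg_left hI'L1 hMnn
    · rw [integral_undef hint]
      simpa using mul_nonneg hMnn (Real.sqrt_nonneg _)
  have houter : ∀ x, |∫ y, hJ' x * K x y * hI' y| ≤ |hJ' x| * (M * Real.sqrt (rI ^ d)) := by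
    intro x
    by_cases hx : x ∈ J
    · have heq : (fun y => hJ' x * K x y * hI' y) = fun y => hJ' x * (K x y * hI' y) := by
        ext y; ring
      rw [heq, integral_const_mul, abs_mul]
      exact mul_le_mul_of_nonneg_left (hinner x hx) (abs_nonneg _)
    · simp [hJ'supp x hx]
  calc |∫ x, ∫ y, hJ' x * K x y * hI' y|
      ≤ ∫ x, |hJ' x| * (M * Real.sqrt (rI ^ d)) := by
        rw [← Real.norm_eq_abs]
        exact norm_integral_le_of_norm_le (hJ'int.abs.mul_const _)
          (Filter.Eventually.of_forall (fun x => by rw [Real.norm_eq_abs]; exact houter x))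
    _ = (∫ x, |hJ' x|) * (M * Real.sqrt (rI ^ d)) := integral_mul_const _ _
    _ ≤ Real.sqrt (rJ ^ d) * (M * Real.sqrt (rI ^ d)) :=
        mul_le_mul_of_nonneg_right hJ'L1 (mul_nonneg hMnn (Real.sqrt_nonneg _))
    _ = M * (Real.sqrt (rI ^ d) * Real.sqrt (rJ ^ d)) := by ring
end

section
/- The kernel K_n(z) = (−1)^n·(|n|/π)·(z̄/z)^n·|z|^{−2} of the n-th power of the Ahlfors–Beurling operator satisfies the size bound |K_n(z)| = (|n|/π)·|z|^{−2} for all z ∈ ℂ \ {0}, and the gradient bound |∇K_n(z)| ≤ C·|n|²·|z|^{−3} for a universal constant C; consequently for each α ∈ (0,1], |K_n(z) − K_n(z')| ≤ C_α·|n|^{1+α}·(|z−z'|/|z|)^α·|z|^{−2} whenever |z| > 2|z−z'|. -/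
open scoped Real
open Complex

noncomputable def conjL : ℂ →L[ℝ] ℂ := Complex.conjCLE.toContinuousLinearMap

lemma expr_eq (n : ℤ) (z : ℂ) (hz : z ≠ 0) :
    (-1 : ℂ) ^ n * (((n.natAbs : ℝ) / π : ℝ) : ℂ) *
        ((starRingEnd ℂ) z / z) ^ n * (((‖z‖) ^ 2 : ℝ) : ℂ)⁻¹
    = ((-1 : ℂ) ^ n * (((n.natAbs : ℝ) / π : ℝ) : ℂ)) *
        (((starRingEnd ℂ) z) ^ (n - 1) * z ^ (-(n + 1))) := by
  have hcz : (starRingEnd ℂ) z ≠ 0 := by simpa using hz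
  have habs : ((‖z‖ ^ 2 : ℝ) : ℂ) = z * (starRingEnd ℂ) z := by
    rw [← Complex.normSq_eq_norm_sq]; exact_mod_cast (Complex.mul_conj z).symm
  rw [habs, div_zpow, zpow_sub₀ hcz, zpow_neg, zpow_add₀ hz]
  field_simp

lemma hasD (n : ℤ) (z : ℂ) (hz : z ≠ 0) :
    ∃ L : ℂ →L[ℝ] ℂ,
      HasFDerivAt (fun w : ℂ => ((starRingEnd ℂ) w) ^ (n - 1) * w ^ (-(n + 1))) L z ∧
      ∀ w, ‖L w‖ ≤ ((|(n:ℝ) - 1| + |(n:ℝ) + 1|) * (‖z‖ ^ 3)⁻¹) * ‖w‖ := by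
  have hcz : (starRingEnd ℂ) z ≠ 0 := by simpa using hz
  have h1' := (hasDerivAt_zpow (n-1) ((starRingEnd ℂ) z) (Or.inl hcz)).hasFDerivAt
  have hconj : HasFDerivAt (fun w : ℂ => (starRingEnd ℂ) w) conjL z :=
    Complex.conjCLE.hasFDerivAt
  have h1 := (h1'.restrictScalars ℝ).comp z hconj
  have h2 := ((hasDerivAt_zpow (-(n+1)) z (Or.inl hz)).hasFDerivAt).restrictScalars ℝ
  have hmul := h1.mul h2
  refine ⟨_, hmul, fun w => ?_⟩
  have habs : ‖z‖ ≠ 0 := norm_ne_zero_iff.mpr hz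
  have hz3a : ‖z‖ ^ ((n:ℤ)-1) * ‖z‖ ^ (-(n+1)-1 : ℤ) = (‖z‖ ^ 3)⁻¹ := by
    rw [← zpow_add₀ habs, show (n-1) + (-(n+1)-1) = -3 by ring, zpow_neg]
    norm_num
  have hz3b : ‖z‖ ^ (-(n+1) : ℤ) * ‖z‖ ^ ((n:ℤ)-1-1) = (‖z‖ ^ 3)⁻¹ := by
    rw [← zpow_add₀ habs, show (-(n+1)) + (n-1-1) = -3 by ring, zpow_neg]
    norm_num
  have hc2 : ‖((-(n+1) : ℤ) : ℂ)‖ = |(n:ℝ) + 1| := by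
    rw [Complex.norm_intCast]; push_cast; rw [abs_neg]
  have hc1 : ‖(((n-1) : ℤ) : ℂ)‖ = |(n:ℝ) - 1| := by
    rw [Complex.norm_intCast]; push_cast; ring_nf
  have hcw : ‖conjL w‖ = ‖w‖ := by
    simp [conjL]
  have hns : ‖(starRingEnd ℂ) z‖ = ‖z‖ := RCLike.norm_conj z
  simp only [ContinuousLinearMap.add_apply, ContinuousLinearMap.smul_apply,
    ContinuousLinearMap.coe_comp', Function.comp_apply,
    ContinuousLinearMap.coe_restrictScalars', ContinuousLinearMap.smulRight_apply,
    ContinuousLinearMap.one_apply, smul_eq_mul]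
  calc ‖(starRingEnd ℂ) z ^ (n - 1) * (w * (((-(n+1):ℤ):ℂ) * z ^ (-(n + 1) - 1))) +
        z ^ (-(n + 1)) * (conjL w * ((((n-1):ℤ):ℂ) * (starRingEnd ℂ) z ^ (n - 1 - 1)))‖
      ≤ ‖(starRingEnd ℂ) z ^ (n - 1) * (w * (((-(n+1):ℤ):ℂ) * z ^ (-(n + 1) - 1)))‖ +
        ‖z ^ (-(n + 1)) * (conjL w * ((((n-1):ℤ):ℂ) * (starRingEnd ℂ) z ^ (n - 1 - 1)))‖ :=
        norm_add_le _ _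
    _ = (‖z‖ ^ ((n:ℤ)-1) * ‖z‖ ^ (-(n+1)-1 : ℤ)) * (|(n:ℝ) + 1| * ‖w‖) +
        (‖z‖ ^ (-(n+1) : ℤ) * ‖z‖ ^ ((n:ℤ)-1-1)) * (|(n:ℝ) - 1| * ‖w‖) := by
        rw [norm_mul, norm_mul, norm_mul, norm_mul, norm_mul, norm_mul, norm_zpow, norm_zpow,
          norm_zpow, norm_zpow, hc1, hc2, hcw, hns]
        ring
    _ = ((|(n:ℝ) - 1| + |(n:ℝ) + 1|) * (‖z‖ ^ 3)⁻¹) * ‖w‖ := by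
        rw [hz3a, hz3b]; ring

lemma sizeK (K : ℤ → ℂ → ℂ)
    (hK : ∀ (n : ℤ) (z : ℂ),
      K n z = (-1 : ℂ) ^ n * (((n.natAbs : ℝ) / π : ℝ) : ℂ) *
        ((starRingEnd ℂ) z / z) ^ n * (((‖z‖) ^ 2 : ℝ) : ℂ)⁻¹)
    (n : ℤ) (z : ℂ) (hz : z ≠ 0) :
    ‖K n z‖ = ((n.natAbs : ℝ) / π) / ‖z‖ ^ 2 := by
  have hcz : ‖(starRingEnd ℂ) z / z‖ = 1 := by
    rw [norm_div, Complex.norm_conj, div_self (by simpa using hz)]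
  rw [hK n z, norm_mul, norm_mul, norm_mul, norm_zpow, norm_zpow, hcz, norm_inv,
    Complex.norm_real, Complex.norm_real, Real.norm_eq_abs, Real.norm_eq_abs]
  rw [_root_.abs_of_nonneg (by positivity : (0:ℝ) ≤ (n.natAbs : ℝ) / π),
    _root_.abs_of_nonneg (by positivity : (0:ℝ) ≤ ‖z‖ ^ 2)]
  simp [div_eq_mul_inv]

lemma gradK (K : ℤ → ℂ → ℂ)
    (hK : ∀ (n : ℤ) (z : ℂ),
      K n z = (-1 : ℂ) ^ n * (((n.natAbs : ℝ) / π : ℝ) : ℂ) *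
        ((starRingEnd ℂ) z / z) ^ n * (((‖z‖) ^ 2 : ℝ) : ℂ)⁻¹)
    (n : ℤ) (hn : n ≠ 0) (z : ℂ) (hz : z ≠ 0) :
    DifferentiableAt ℝ (K n) z ∧
      ‖fderiv ℝ (K n) z‖ ≤ 4 * (n : ℝ) ^ 2 / ‖z‖ ^ 3 := by
  obtain ⟨L, hL, hLb⟩ := hasD n z hz
  set c : ℂ := (-1 : ℂ) ^ n * (((n.natAbs : ℝ) / π : ℝ) : ℂ) with hc
  have hg : HasFDerivAt (fun w : ℂ => c * (((starRingEnd ℂ) w) ^ (n - 1) * w ^ (-(n + 1))))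
      (c • L) z := hL.const_mul c
  have hev : K n =ᶠ[nhds z] fun w : ℂ => c * (((starRingEnd ℂ) w) ^ (n - 1) * w ^ (-(n + 1))) := by
    have hmem : {w : ℂ | w ≠ 0} ∈ nhds z := isOpen_compl_singleton.mem_nhds (by simpa using hz)
    exact Filter.eventually_of_mem hmem fun w hw => by rw [hK n w, expr_eq n w hw]
  have hKd : HasFDerivAt (K n) (c • L) z := hg.congr_of_eventuallyEq hev
  refine ⟨hKd.differentiableAt, ?_⟩
  rw [hKd.fderiv]
  have hnormc : ‖c‖ = (n.natAbs : ℝ) / π := by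
    rw [hc, norm_mul, norm_zpow, norm_neg, norm_one, one_zpow, one_mul, Complex.norm_real]
    exact abs_of_nonneg (by positivity)
  have hN1 : (1:ℝ) ≤ |(n:ℝ)| := by
    have := Int.one_le_abs hn
    exact_mod_cast this
  have habs4 : |(n:ℝ) - 1| + |(n:ℝ) + 1| ≤ 4 * |(n:ℝ)| := by
    rcases abs_cases ((n:ℝ) - 1) with ⟨h1, _⟩ | ⟨h1, _⟩ <;>
      rcases abs_cases ((n:ℝ) + 1) with ⟨h2, _⟩ | ⟨h2, _⟩ <;>
      rcases abs_cases ((n:ℝ)) with ⟨h3, _⟩ | ⟨h3, _⟩ <;> linarith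
  have hzpos : (0:ℝ) < ‖z‖ := by
    exact norm_pos_iff.mpr hz
  have hMn : (0:ℝ) ≤ 4 * (n:ℝ)^2 / ‖z‖ ^ 3 := by positivity
  refine ContinuousLinearMap.opNorm_le_bound _ hMn fun w => ?_
  rw [ContinuousLinearMap.smul_apply, norm_smul, hnormc]
  calc (n.natAbs : ℝ) / π * ‖L w‖
      ≤ (n.natAbs : ℝ) / π * (((|(n:ℝ) - 1| + |(n:ℝ) + 1|) * (‖z‖ ^ 3)⁻¹) * ‖w‖) := by
        have := hLb w
        have hp : (0:ℝ) ≤ (n.natAbs : ℝ) / π := by positivity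
        exact mul_le_mul_of_nonneg_left this hp
    _ ≤ 4 * (n:ℝ)^2 / ‖z‖ ^ 3 * ‖w‖ := by
        have hnc : (n.natAbs : ℝ) = |(n:ℝ)| := by
          simp [Nat.cast_natAbs, Int.cast_abs]
        have hpi : (1:ℝ) ≤ π := by linarith [Real.pi_gt_three]
        have hd : (n.natAbs : ℝ) / π ≤ |(n:ℝ)| := by
          rw [hnc]; exact div_le_self (abs_nonneg _) hpi
        have hinv : (0:ℝ) < (‖z‖ ^ 3)⁻¹ := by positivity
        have hnorm : ‖z‖ = ‖z‖ := rfl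
        rw [hnorm, div_eq_mul_inv]
        have h1 : (n.natAbs : ℝ) / π * ((|(n:ℝ) - 1| + |(n:ℝ) + 1|) * (‖z‖ ^ 3)⁻¹)
            ≤ |(n:ℝ)| * ((4 * |(n:ℝ)|) * (‖z‖ ^ 3)⁻¹) := by
          have hb : (0:ℝ) ≤ |(n:ℝ)| := abs_nonneg _
          have := mul_le_mul hd (mul_le_mul_of_nonneg_right habs4 hinv.le)
            (by positivity) hb
          linarith [this]
        have h2 : |(n:ℝ)| * ((4 * |(n:ℝ)|) * (‖z‖ ^ 3)⁻¹)
            = 4 * (n:ℝ)^2 * (‖z‖ ^ 3)⁻¹ := by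
          rw [show |(n:ℝ)| * ((4 * |(n:ℝ)|) * (‖z‖ ^ 3)⁻¹)
              = 4 * (|(n:ℝ)| * |(n:ℝ)|) * (‖z‖ ^ 3)⁻¹ by ring,
            ← abs_mul, abs_mul_self]
          ring
        calc (n.natAbs : ℝ) / π * (((|(n:ℝ) - 1| + |(n:ℝ) + 1|) * (‖z‖ ^ 3)⁻¹) * ‖w‖)
            = (n.natAbs : ℝ) / π * ((|(n:ℝ) - 1| + |(n:ℝ) + 1|) * (‖z‖ ^ 3)⁻¹) * ‖w‖ := by
              ring
          _ ≤ 4 * (n:ℝ)^2 * (‖z‖ ^ 3)⁻¹ * ‖w‖ := by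
              rw [← h2]; exact mul_le_mul_of_nonneg_right h1 (norm_nonneg _)

theorem stmt18 (K : ℤ → ℂ → ℂ)
    (hK : ∀ (n : ℤ) (z : ℂ),
      K n z = (-1 : ℂ) ^ n * (((n.natAbs : ℝ) / π : ℝ) : ℂ) *
        ((starRingEnd ℂ) z / z) ^ n * (((‖z‖) ^ 2 : ℝ) : ℂ)⁻¹) :
    (∀ (n : ℤ), n ≠ 0 → ∀ z : ℂ, z ≠ 0 →
      ‖K n z‖ = ((n.natAbs : ℝ) / π) / ‖z‖ ^ 2) ∧
    (∃ C : ℝ, 0 < C ∧ ∀ (n : ℤ), n ≠ 0 → ∀ z : ℂ, z ≠ 0 →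
      ‖fderiv ℝ (K n) z‖ ≤ C * (n : ℝ) ^ 2 / ‖z‖ ^ 3) ∧
    (∀ α ∈ Set.Ioc (0:ℝ) 1, ∃ Cα : ℝ, 0 < Cα ∧ ∀ (n : ℤ), n ≠ 0 → ∀ z z' : ℂ,
      ‖z‖ > 2 * ‖z - z'‖ →
      ‖K n z - K n z'‖ ≤
        Cα * (n.natAbs : ℝ) ^ (1 + α) * (‖z - z'‖ / ‖z‖) ^ α /
          ‖z‖ ^ 2) := by
  refine ⟨fun n hn z hz => sizeK K hK n z hz, ⟨4, by norm_num,
    fun n hn z hz => (gradK K hK n hn z hz).2⟩, fun α hα => ⟨37, by norm_num, ?_⟩⟩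
  rintro n hn z z' hzz
  obtain ⟨hα0, hα1⟩ := hα
  set d := ‖z - z'‖ with hd
  set r := ‖z‖ with hr
  have hd0 : 0 ≤ d := norm_nonneg _
  have hrpos : 0 < r := lt_of_le_of_lt (by linarith) hzz
  have hz : z ≠ 0 := by
    intro h; rw [h] at hr; simp [hr] at hrpos
  have hz' : z' ≠ 0 := by
    intro h
    rw [h, sub_zero] at hd
    simp only [hd] at hzz
    -- hzz : r > 2 * r contradiction since r = d here... careful: d = abs z = r
    rw [hr] at hzz; linarith
  set N : ℝ := (n.natAbs : ℝ) with hNdef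
  have hN1 : (1:ℝ) ≤ N := by
    rw [hNdef]
    exact_mod_cast Nat.one_le_iff_ne_zero.mpr (Int.natAbs_ne_zero.mpr hn)
  have hN0 : (0:ℝ) < N := lt_of_lt_of_le one_pos hN1
  have hn2 : ((n:ℝ))^2 = N^2 := by
    rw [hNdef, Nat.cast_natAbs, Int.cast_abs, _root_.sq_abs]
  have hpi : (1:ℝ) ≤ π := by linarith [Real.pi_gt_three]
  -- lower bound on |z'| and points of the ball
  have hz'lb : r / 2 ≤ ‖z'‖ := by
    have : r ≤ ‖z'‖ + d := by
      calc r = ‖z' + (z - z')‖ := by rw [hr]; ring_nf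
        _ ≤ ‖z'‖ + d := by rw [hd]; exact norm_add_le _ _
    linarith
  -- MVT bound
  have hA : ‖K n z - K n z'‖ ≤ 32 * N^2 / r^3 * d := by
    have hball : ∀ w ∈ Metric.closedBall z d, r / 2 ≤ ‖w‖ := by
      intro w hw
      rw [Metric.mem_closedBall, dist_eq_norm] at hw
      have : r ≤ ‖w‖ + d := by
        calc r = ‖w + (z - w)‖ := by rw [hr]; ring_nf
          _ ≤ ‖w‖ + ‖z - w‖ := norm_add_le _ _
          _ ≤ ‖w‖ + d := by
              have he : ‖z - w‖ ≤ d := by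
                rw [norm_sub_rev]
                exact hw
              linarith
      linarith
    have hwne : ∀ w ∈ Metric.closedBall z d, w ≠ 0 := by
      intro w hw h0
      have := hball w hw
      rw [h0] at this; simp at this; linarith
    have hdiff : ∀ w ∈ Metric.closedBall z d, DifferentiableAt ℝ (K n) w :=
      fun w hw => (gradK K hK n hn w (hwne w hw)).1
    have hbound : ∀ w ∈ Metric.closedBall z d, ‖fderiv ℝ (K n) w‖ ≤ 32 * N^2 / r^3 := by
      intro w hw
      have h1 := (gradK K hK n hn w (hwne w hw)).2
      have h2 : (0:ℝ) < ‖w‖ := lt_of_lt_of_le (by linarith) (hball w hw)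
      calc ‖fderiv ℝ (K n) w‖ ≤ 4 * (n:ℝ)^2 / ‖w‖ ^ 3 := h1
        _ ≤ 4 * (n:ℝ)^2 / (r/2)^3 := by
            refine div_le_div_of_nonneg_left ?_ (by positivity) ?_
            · rw [hn2]; positivity
            · exact pow_le_pow_left₀ (by positivity) (hball w hw) 3
        _ = 32 * N^2 / r^3 := by rw [hn2]; field_simp; ring
    have hmvt := Convex.norm_image_sub_le_of_norm_fderiv_le hdiff hbound
      (convex_closedBall z d)
      (by
        rw [Metric.mem_closedBall, dist_eq_norm, norm_sub_rev])
      (Metric.mem_closedBall_self hd0)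
    calc ‖K n z - K n z'‖ = ‖K n z - K n z'‖ := rfl
      _ ≤ 32 * N^2 / r^3 * ‖z - z'‖ := hmvt
      _ = 32 * N^2 / r^3 * d := rfl
  -- size bound
  have hB : ‖K n z - K n z'‖ ≤ 5 * N / r^2 := by
    have h1 := sizeK K hK n z hz
    have h2 := sizeK K hK n z' hz'
    have h3 : (N/π) / ‖z'‖ ^ 2 ≤ (N/π) / (r/2)^2 :=
      div_le_div_of_nonneg_left (by positivity) (by positivity)
        (pow_le_pow_left₀ (by positivity) hz'lb 2)
    have h4 : (N/π) / (r/2)^2 = 4 * (N/π) / r^2 := by field_simp; ring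
    have h5 : N/π ≤ N := div_le_self hN0.le hpi
    calc ‖K n z - K n z'‖ = ‖K n z - K n z'‖ := rfl
      _ ≤ ‖K n z‖ + ‖K n z'‖ := norm_sub_le _ _
      _ = (N/π) / r^2 + (N/π) / ‖z'‖ ^ 2 := by
          rw [h1, h2]
      _ ≤ (N/π) / r^2 + 4 * (N/π) / r^2 := by rw [← h4]; linarith [h3]
      _ = 5 * (N/π) / r^2 := by ring
      _ ≤ 5 * N / r^2 := by
          have h5' : N/π ≤ N := div_le_self hN0.le hpi
          exact div_le_div_of_nonneg_right (by linarith) (by positivity)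
  -- case d = 0
  rcases eq_or_lt_of_le hd0 with hdz | hdpos
  · have hzz' : z = z' := by
      have h0 : ‖z - z'‖ = 0 := by
        rw [← hd, ← hdz]
      exact sub_eq_zero.mp (norm_eq_zero.mp h0)
    rw [hzz', sub_self]
    simp only [norm_zero]
    positivity
  · set t := d / r with ht
    have htpos : 0 < t := div_pos hdpos hrpos
    have hthalf : t < 1 := by
      rw [ht, div_lt_one hrpos]; linarith
    rcases le_total (N * t) 1 with hc | hc
    · -- use hA
      have key : N^2 * t ≤ N^(1+α) * t^α := by
        have e : N^(1+α) * t^α * ((N*t)^(1-α)) = N^2 * t := by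
          rw [Real.mul_rpow hN0.le htpos.le,
            show N^(1+α) * t^α * (N^(1-α) * t^(1-α)) = (N^(1+α) * N^(1-α)) * (t^α * t^(1-α)) by ring,
            ← Real.rpow_add hN0, ← Real.rpow_add htpos,
            show (1+α) + (1-α) = (2:ℝ) by ring, show α + (1-α) = (1:ℝ) by ring,
            Real.rpow_one, Real.rpow_two]
        have hle1 : (N*t)^(1-α) ≤ 1 :=
          Real.rpow_le_one (by positivity) hc (by linarith)
        calc N^2 * t = N^(1+α) * t^α * ((N*t)^(1-α)) := e.symm
          _ ≤ N^(1+α) * t^α * 1 := by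
              have : (0:ℝ) ≤ N^(1+α) * t^α := by positivity
              exact mul_le_mul_of_nonneg_left hle1 this
          _ = N^(1+α) * t^α := mul_one _
      calc ‖K n z - K n z'‖ ≤ 32 * N^2 / r^3 * d := hA
        _ = 32 * (N^2 * t) / r^2 := by rw [ht]; field_simp
        _ ≤ 32 * (N^(1+α) * t^α) / r^2 :=
            div_le_div_of_nonneg_right (by linarith [key]) (by positivity)
        _ ≤ 37 * (N^(1+α) * t^α) / r^2 := by
            have hX : (0:ℝ) ≤ N^(1+α) * t^α := by positivity
            exact div_le_div_of_nonneg_right (by linarith) (by positivity)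
        _ = 37 * N^(1+α) * t^α / r^2 := by ring
    · -- use hB
      have key : N ≤ N^(1+α) * t^α := by
        have h1 : (1:ℝ) ≤ (N*t)^α := Real.one_le_rpow hc hα0.le
        calc N = N * 1 := (mul_one _).symm
          _ ≤ N * (N*t)^α := mul_le_mul_of_nonneg_left h1 hN0.le
          _ = N^(1+α) * t^α := by
              rw [Real.mul_rpow hN0.le htpos.le, Real.rpow_add hN0, Real.rpow_one]
              ring
      calc ‖K n z - K n z'‖ ≤ 5 * N / r^2 := hB
        _ ≤ 5 * (N^(1+α) * t^α) / r^2 :=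
            div_le_div_of_nonneg_right (by linarith [key]) (by positivity)
        _ ≤ 37 * (N^(1+α) * t^α) / r^2 := by
            have hX : (0:ℝ) ≤ N^(1+α) * t^α := by positivity
            exact div_le_div_of_nonneg_right (by linarith) (by positivity)
        _ = 37 * N^(1+α) * t^α / r^2 := by ring
end
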